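/- The amoeba 𝒜_p of a Laurent polynomial p is a closed subset of ℝ^n. -/

import Mathlib

open MeasureTheory Real

noncomputable section

/-- Evaluation of the Laurent polynomial with support `A` and coefficients `c`
at the point `z`. -/
def lEval {n : ℕ} (A : Finset (Fin n → ℤ)) (c : (Fin n → ℤ) → ℂ)
    (z : Fin n → ℂ) : ℂ :=
  ∑ α ∈ A, c α * ∏ i, z i ^ α i

/-- The coordinatewise logarithm of moduli. -/
def logMap {n : ℕ} (z : Fin n → ℂ) : Fin n → ℝ :=
  fun i => Real.log ‖z i‖

/-- The amoeba of the Laurent polynomial with support `A` and coefficients `c`. -/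
def amoeba {n : ℕ} (A : Finset (Fin n → ℤ)) (c : (Fin n → ℤ) → ℂ) :
    Set (Fin n → ℝ) :=
  logMap '' {z | (∀ i, z i ≠ 0) ∧ lEval A c z = 0}

/-- The point of the complex torus with radial coordinates `e^u` and angles `θ`. -/
def tPt {n : ℕ} (u θ : Fin n → ℝ) : Fin n → ℂ :=
  fun i => Complex.exp (u i + θ i * Complex.I)

/-- The cube `[0, 2π]^n`. -/
def cube (n : ℕ) : Set (Fin n → ℝ) := Set.univ.pi fun _ => Set.Icc 0 (2 * π)

/-- The order vector of a point `u` in the amoeba complement. -/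
def order {n : ℕ} (A : Finset (Fin n → ℤ)) (c : (Fin n → ℤ) → ℂ)
    (u : Fin n → ℝ) : Fin n → ℂ := fun j =>
  (((2 * π) ^ n : ℝ) : ℂ)⁻¹ *
    ∫ θ in cube n,
      (∑ α ∈ A, c α * (α j : ℂ) * ∏ i, tPt u θ i ^ α i) / lEval A c (tPt u θ)

/-- The Ronkin function. -/
def ronkin {n : ℕ} (A : Finset (Fin n → ℤ)) (c : (Fin n → ℤ) → ℂ)
    (x : Fin n → ℝ) : ℝ :=
  ((2 * π) ^ n)⁻¹ * ∫ θ in cube n, Real.log ‖lEval A c (tPt x θ)‖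

/-- The Newton polytope of the support `A`. -/
def newton {n : ℕ} (A : Finset (Fin n → ℤ)) : Set (Fin n → ℝ) :=
  convexHull ℝ ((fun (α : Fin n → ℤ) (i : Fin n) => (α i : ℝ)) '' (A : Set (Fin n → ℤ)))

end

lemma tPt_ne_zero {n : ℕ} (u θ : Fin n → ℝ) (i : Fin n) : tPt u θ i ≠ 0 :=
  Complex.exp_ne_zero _

lemma logMap_tPt {n : ℕ} (u θ : Fin n → ℝ) : logMap (tPt u θ) = u := by
  funext i
  simp [logMap, tPt, Complex.norm_exp, Real.log_exp]

lemma amoeba_eq {n : ℕ} (A : Finset (Fin n → ℤ)) (c : (Fin n → ℤ) → ℂ) :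
    amoeba A c = {u | ∃ θ ∈ cube n, lEval A c (tPt u θ) = 0} := by
  ext u
  constructor
  · rintro ⟨z, ⟨hz, hz0⟩, rfl⟩
    refine ⟨fun i => if Complex.arg (z i) < 0 then Complex.arg (z i) + 2 * π
      else Complex.arg (z i), ?_, ?_⟩
    · intro i _
      have h1 := Complex.neg_pi_lt_arg (z i)
      have h2 := Complex.arg_le_pi (z i)
      have hπ := Real.pi_pos
      constructor <;> (dsimp only; split_ifs) <;> nlinarith
    · have hzt : tPt (logMap z) (fun i => if Complex.arg (z i) < 0 then
          Complex.arg (z i) + 2 * π else Complex.arg (z i)) = z := by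
        funext i
        have hne := hz i
        have habs : (0:ℝ) < ‖z i‖ := by
          simpa [norm_pos_iff] using hne
        have key : Complex.exp ((Real.log ‖z i‖ : ℂ) +
            (Complex.arg (z i) : ℂ) * Complex.I) = z i := by
          rw [Complex.exp_add, ← Complex.ofReal_exp, Real.exp_log habs]
          exact Complex.norm_mul_exp_arg_mul_I (z i)
        dsimp only [tPt, logMap]
        split_ifs with h
        · have h2 : ((Complex.arg (z i) + 2 * π : ℝ) : ℂ) * Complex.I
              = (Complex.arg (z i) : ℂ) * Complex.I + 2 * (π : ℂ) * Complex.I := by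
            push_cast; ring
          rw [h2, ← add_assoc, Complex.exp_add, key, Complex.exp_two_pi_mul_I, mul_one]
        · exact key
      rw [hzt, hz0]
  · rintro ⟨θ, hθ, h0⟩
    exact ⟨tPt u θ, ⟨tPt_ne_zero u θ, h0⟩, logMap_tPt u θ⟩

/-- The amoeba of a Laurent polynomial is a closed subset of `ℝⁿ`. -/
theorem stmt_11 {n : ℕ} (A : Finset (Fin n → ℤ)) (c : (Fin n → ℤ) → ℂ)
    (hA : A.Nonempty) (hc : ∀ α ∈ A, c α ≠ 0) :
    IsClosed (amoeba A c) := by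
  rw [amoeba_eq, ← isOpen_compl_iff, isOpen_iff_mem_nhds]
  intro u hu
  have hcont : Continuous (fun p : (Fin n → ℝ) × (Fin n → ℝ) => lEval A c (tPt p.1 p.2)) := by
    unfold lEval
    refine continuous_finset_sum _ fun α _ => Continuous.mul continuous_const ?_
    refine continuous_finset_prod _ fun i _ => ?_
    have hrw : ∀ p : (Fin n → ℝ) × (Fin n → ℝ),
        tPt p.1 p.2 i ^ (α i) =
        Complex.exp ((α i : ℂ) * ((p.1 i : ℂ) + (p.2 i : ℂ) * Complex.I)) := by
      intro p
      rw [Complex.exp_int_mul]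
      rfl
    simp only [hrw]
    fun_prop
  have hcube : IsCompact (cube n) :=
    isCompact_univ_pi fun _ => isCompact_Icc
  have hsub : ({u} : Set (Fin n → ℝ)) ×ˢ cube n ⊆
      {p : (Fin n → ℝ) × (Fin n → ℝ) | lEval A c (tPt p.1 p.2) ≠ 0} := by
    rintro ⟨v, θ⟩ ⟨hv, hθ⟩ h0
    rcases hv with rfl
    exact hu ⟨θ, hθ, h0⟩
  obtain ⟨V, W, hVopen, _, hV, hW, hVW⟩ :=
    generalized_tube_lemma isCompact_singleton hcube
      (isClosed_eq hcont continuous_const).isOpen_compl hsub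
  refine Filter.mem_of_superset (hVopen.mem_nhds (hV rfl)) ?_
  rintro v hv ⟨θ, hθ, h0⟩
  exact hVW (Set.mk_mem_prod hv (hW hθ)) h0
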